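/- arXiv:2011.13732 — 2 statements merged into one kernel-verified Lean document; each statement's English description precedes it below -/
import Mathlib

section
/- Let F_oct = x1x2x3 + x1x3x4 + x1x4x5 + x1x2x5 + x2x3x6 + x3x4x6 + x4x5x6 + x2x5x6 ∈ ℝ[x_1,…,x_6]. Then Ann(F_oct) is the ideal of ℝ[∂_1,…,∂_6] generated by ∂_1−∂_6, ∂_2−∂_4, ∂_3−∂_5, ∂_1², ∂_2², ∂_3². -/
open MvPolynomial

noncomputable section

lemma pderiv_commute {n : ℕ} (i j : Fin n) (f : MvPolynomial (Fin n) ℝ) :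
    pderiv i (pderiv j f) = pderiv j (pderiv i f) := by
  rcases eq_or_ne i j with rfl | hij
  · rfl
  · induction f using MvPolynomial.induction_on' with
    | monomial m a =>
        simp only [pderiv_monomial]
        have h1 : (m - Finsupp.single j 1 : Fin n →₀ ℕ) i = m i := by
          rw [Finsupp.tsub_apply, Finsupp.single_eq_of_ne' hij.symm, tsub_zero]
        have h2 : (m - Finsupp.single i 1 : Fin n →₀ ℕ) j = m j := by
          rw [Finsupp.tsub_apply, Finsupp.single_eq_of_ne' hij, tsub_zero]
        rw [h1, h2, tsub_right_comm]
        congr 1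
        ring
    | add p q hp hq => simp [hp, hq]

/-- The set of the partial derivative operators `∂ᵢ` on `ℝ[x₁, …, xₙ]`. -/
def pdSet (n : ℕ) : Set (Module.End ℝ (MvPolynomial (Fin n) ℝ)) :=
  Set.range fun i : Fin n =>
    ((pderiv i : Derivation ℝ (MvPolynomial (Fin n) ℝ) (MvPolynomial (Fin n) ℝ)) :
      MvPolynomial (Fin n) ℝ →ₗ[ℝ] MvPolynomial (Fin n) ℝ)

instance pdCommRing (n : ℕ) : CommRing (Algebra.adjoin ℝ (pdSet n)) :=
  Algebra.adjoinCommRingOfComm ℝ (by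
    rintro _ ⟨i, rfl⟩ _ ⟨j, rfl⟩
    apply LinearMap.ext
    intro f
    exact pderiv_commute i j f)

/-- The algebra map sending a polynomial `f` (in the "∂ variables") to the differential
operator `f(∂₁, …, ∂ₙ)` acting on `ℝ[x₁, …, xₙ]`; thus `dop n f F` is the result of
applying the differential operator `f(∂₁, …, ∂ₙ)` to the polynomial `F`. -/
def dop (n : ℕ) : MvPolynomial (Fin n) ℝ →ₐ[ℝ] Module.End ℝ (MvPolynomial (Fin n) ℝ) :=
  (Algebra.adjoin ℝ (pdSet n)).val.comp
    (aeval fun i : Fin n =>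
      (⟨_, Algebra.subset_adjoin (Set.mem_range_self i)⟩ : Algebra.adjoin ℝ (pdSet n)))

/-- `Ann F`, the annihilator of `F`: the ideal of all differential-operator polynomials `f`
with `f(∂₁, …, ∂ₙ) F = 0`. -/
def annIdeal {n : ℕ} (F : MvPolynomial (Fin n) ℝ) : Ideal (MvPolynomial (Fin n) ℝ) where
  carrier := {f | dop n f F = 0}
  add_mem' := by
    intro a b ha hb
    simp only [Set.mem_setOf_eq] at *
    rw [map_add, LinearMap.add_apply, ha, hb, add_zero]
  zero_mem' := by
    simp only [Set.mem_setOf_eq, map_zero, LinearMap.zero_apply]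
  smul_mem' := by
    intro c f hf
    simp only [Set.mem_setOf_eq] at *
    rw [smul_eq_mul, map_mul, Module.End.mul_apply, hf, map_zero]

/-- The Artinian Gorenstein algebra `A_F = ℝ[∂₁, …, ∂ₙ]/Ann(F)`. -/
abbrev AF {n : ℕ} (F : MvPolynomial (Fin n) ℝ) := MvPolynomial (Fin n) ℝ ⧸ annIdeal F

/-- The degree-`k` homogeneous component `(A_F)_k` of `A_F`, as a submodule of `A_F`:
the image of the space of homogeneous polynomials of degree `k` under the quotient map. -/
def gradeA {n : ℕ} (F : MvPolynomial (Fin n) ℝ) (k : ℕ) : Submodule ℝ (AF F) :=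
  Submodule.map (Ideal.Quotient.mkₐ ℝ (annIdeal F)).toLinearMap
    (homogeneousSubmodule (Fin n) ℝ k)

/-- `ℓ ∈ A_F` is a strong Lefschetz element of `A_F` (with socle degree `s`) if the
multiplication map `×ℓ^(s-2k) : (A_F)_k → (A_F)_(s-k)` is bijective for every `k` with
`0 ≤ k ≤ s/2`. -/
def IsSLelem {n : ℕ} (F : MvPolynomial (Fin n) ℝ) (s : ℕ) (ℓ : AF F) : Prop :=
  ∀ k : ℕ, 2 * k ≤ s →
    Set.BijOn (fun f => ℓ ^ (s - 2 * k) * f) (gradeA F k) (gradeA F (s - k))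

/-- `A_F` (with socle degree `s`) has the strong Lefschetz property. -/
def HasSLP {n : ℕ} (F : MvPolynomial (Fin n) ℝ) (s : ℕ) : Prop :=
  ∃ ℓ ∈ gradeA F 1, IsSLelem F s ℓ

/-- `A_F` (with socle degree `s`) satisfies the Hodge–Riemann relation with respect to the
class `ℓ` of a linear form `L`: for every `k` with `0 ≤ k ≤ s/2`, the bilinear form
`Q^k_ℓ(f, g) = (-1)^k P^k(f, ℓ^(s-2k) g)` (where `P^k(f, g) = f g F` is the Poincaré duality
pairing) is positive definite on the kernel of `×ℓ^(s-2k+1) : (A_F)_k → (A_F)_(s-k+1)`,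
i.e. `Q^k_ℓ(f, f) > 0` for every nonzero `f ∈ (A_F)_k` in that kernel. -/
def SatisfiesHRR {n : ℕ} (F : MvPolynomial (Fin n) ℝ) (s : ℕ) (L : MvPolynomial (Fin n) ℝ) :
    Prop :=
  ∀ k : ℕ, 2 * k ≤ s →
    ∀ f ∈ homogeneousSubmodule (Fin n) ℝ k,
      dop n (L ^ (s - 2 * k + 1) * f) F = 0 →
      Ideal.Quotient.mk (annIdeal F) f ≠ 0 →
      0 < (-1 : ℝ) ^ k * constantCoeff (dop n (L ^ (s - 2 * k) * f * f) F)

/-- The facet polynomial of the regular octahedron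
(vertices `0,…,5` standing for `1,…,6`). -/
def Foct : MvPolynomial (Fin 6) ℝ :=
  X 0 * X 1 * X 2 + X 0 * X 2 * X 3 + X 0 * X 3 * X 4 + X 0 * X 1 * X 4 +
    X 1 * X 2 * X 5 + X 2 * X 3 * X 5 + X 3 * X 4 * X 5 + X 1 * X 4 * X 5

lemma dop_X_apply (i : Fin 6) (p : MvPolynomial (Fin 6) ℝ) :
    dop 6 (X i) p = pderiv i p := by
  simp [dop, aeval_X]

lemma dop_mul_apply (f g : MvPolynomial (Fin 6) ℝ) (p : MvPolynomial (Fin 6) ℝ) :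
    dop 6 (f * g) p = dop 6 f (dop 6 g p) := by
  rw [map_mul]; rfl

lemma dop_one_apply (p : MvPolynomial (Fin 6) ℝ) : dop 6 (1 : MvPolynomial (Fin 6) ℝ) p = p := by
  rw [map_one]; rfl

-- first derivatives of Foct
lemma dF0 : pderiv 0 Foct = X 1 * X 2 + X 2 * X 3 + X 3 * X 4 + X 1 * X 4 := by
  simp [Foct, pderiv_mul, pderiv_X_self, pderiv_X_of_ne]; try ring
lemma dF1 : pderiv 1 Foct = X 0 * X 2 + X 0 * X 4 + X 2 * X 5 + X 4 * X 5 := by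
  simp [Foct, pderiv_mul, pderiv_X_self, pderiv_X_of_ne]; try ring
lemma dF2 : pderiv 2 Foct = X 0 * X 1 + X 0 * X 3 + X 1 * X 5 + X 3 * X 5 := by
  simp [Foct, pderiv_mul, pderiv_X_self, pderiv_X_of_ne]; try ring
lemma dF3 : pderiv 3 Foct = X 0 * X 2 + X 0 * X 4 + X 2 * X 5 + X 4 * X 5 := by
  simp [Foct, pderiv_mul, pderiv_X_self, pderiv_X_of_ne]; try ring
lemma dF4 : pderiv 4 Foct = X 0 * X 1 + X 0 * X 3 + X 1 * X 5 + X 3 * X 5 := by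
  simp [Foct, pderiv_mul, pderiv_X_self, pderiv_X_of_ne]; try ring
lemma dF5 : pderiv 5 Foct = X 1 * X 2 + X 2 * X 3 + X 3 * X 4 + X 1 * X 4 := by
  simp [Foct, pderiv_mul, pderiv_X_self, pderiv_X_of_ne]; try ring

-- second derivatives
lemma d00 : pderiv 0 (X 1 * X 2 + X 2 * X 3 + X 3 * X 4 + X 1 * X 4 : MvPolynomial (Fin 6) ℝ) = 0 := by
  simp [pderiv_mul, pderiv_X_self, pderiv_X_of_ne]
lemma d10 : pderiv 1 (X 1 * X 2 + X 2 * X 3 + X 3 * X 4 + X 1 * X 4 : MvPolynomial (Fin 6) ℝ) = X 2 + X 4 := by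
  simp [pderiv_mul, pderiv_X_self, pderiv_X_of_ne]
lemma d20 : pderiv 2 (X 1 * X 2 + X 2 * X 3 + X 3 * X 4 + X 1 * X 4 : MvPolynomial (Fin 6) ℝ) = X 1 + X 3 := by
  simp [pderiv_mul, pderiv_X_self, pderiv_X_of_ne]
lemma d01 : pderiv 0 (X 0 * X 2 + X 0 * X 4 + X 2 * X 5 + X 4 * X 5 : MvPolynomial (Fin 6) ℝ) = X 2 + X 4 := by
  simp [pderiv_mul, pderiv_X_self, pderiv_X_of_ne]
lemma d11 : pderiv 1 (X 0 * X 2 + X 0 * X 4 + X 2 * X 5 + X 4 * X 5 : MvPolynomial (Fin 6) ℝ) = 0 := by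
  simp [pderiv_mul, pderiv_X_self, pderiv_X_of_ne]
lemma d21 : pderiv 2 (X 0 * X 2 + X 0 * X 4 + X 2 * X 5 + X 4 * X 5 : MvPolynomial (Fin 6) ℝ) = X 0 + X 5 := by
  simp [pderiv_mul, pderiv_X_self, pderiv_X_of_ne]
lemma d02 : pderiv 0 (X 0 * X 1 + X 0 * X 3 + X 1 * X 5 + X 3 * X 5 : MvPolynomial (Fin 6) ℝ) = X 1 + X 3 := by
  simp [pderiv_mul, pderiv_X_self, pderiv_X_of_ne]
lemma d12 : pderiv 1 (X 0 * X 1 + X 0 * X 3 + X 1 * X 5 + X 3 * X 5 : MvPolynomial (Fin 6) ℝ) = X 0 + X 5 := by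
  simp [pderiv_mul, pderiv_X_self, pderiv_X_of_ne]
lemma d22 : pderiv 2 (X 0 * X 1 + X 0 * X 3 + X 1 * X 5 + X 3 * X 5 : MvPolynomial (Fin 6) ℝ) = 0 := by
  simp [pderiv_mul, pderiv_X_self, pderiv_X_of_ne]

-- third derivatives (of the linear forms)
lemma e00 : pderiv 0 (X 0 + X 5 : MvPolynomial (Fin 6) ℝ) = 1 := by
  simp [pderiv_X_self, pderiv_X_of_ne]
lemma e10 : pderiv 1 (X 0 + X 5 : MvPolynomial (Fin 6) ℝ) = 0 := by
  simp [pderiv_X_self, pderiv_X_of_ne]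
lemma e20 : pderiv 2 (X 0 + X 5 : MvPolynomial (Fin 6) ℝ) = 0 := by
  simp [pderiv_X_self, pderiv_X_of_ne]
lemma e01 : pderiv 0 (X 1 + X 3 : MvPolynomial (Fin 6) ℝ) = 0 := by
  simp [pderiv_X_self, pderiv_X_of_ne]
lemma e11 : pderiv 1 (X 1 + X 3 : MvPolynomial (Fin 6) ℝ) = 1 := by
  simp [pderiv_X_self, pderiv_X_of_ne]
lemma e21 : pderiv 2 (X 1 + X 3 : MvPolynomial (Fin 6) ℝ) = 0 := by
  simp [pderiv_X_self, pderiv_X_of_ne]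
lemma e02 : pderiv 0 (X 2 + X 4 : MvPolynomial (Fin 6) ℝ) = 0 := by
  simp [pderiv_X_self, pderiv_X_of_ne]
lemma e12 : pderiv 1 (X 2 + X 4 : MvPolynomial (Fin 6) ℝ) = 0 := by
  simp [pderiv_X_self, pderiv_X_of_ne]
lemma e22 : pderiv 2 (X 2 + X 4 : MvPolynomial (Fin 6) ℝ) = 1 := by
  simp [pderiv_X_self, pderiv_X_of_ne]

lemma cF : constantCoeff Foct = 0 := by simp [Foct]

/-- The ideal in question. -/
def Ioct : Ideal (MvPolynomial (Fin 6) ℝ) :=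
  Ideal.span {X 0 - X 5, X 1 - X 3, X 2 - X 4,
    (X 0 : MvPolynomial (Fin 6) ℝ) ^ 2, (X 1 : MvPolynomial (Fin 6) ℝ) ^ 2,
    (X 2 : MvPolynomial (Fin 6) ℝ) ^ 2}

lemma Ioct_le_ann : Ioct ≤ annIdeal Foct := by
  rw [Ioct, Ideal.span_le]
  rintro g hg
  simp only [Set.mem_insert_iff, Set.mem_singleton_iff] at hg
  have key : ∀ h : MvPolynomial (Fin 6) ℝ, dop 6 h Foct = 0 → h ∈ (annIdeal Foct : Set _) :=
    fun h hh => hh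
  rcases hg with rfl | rfl | rfl | rfl | rfl | rfl
  · exact key _ (by rw [map_sub]; simp [LinearMap.sub_apply, dop_X_apply, dF0, dF5])
  · exact key _ (by rw [map_sub]; simp [LinearMap.sub_apply, dop_X_apply, dF1, dF3])
  · exact key _ (by rw [map_sub]; simp [LinearMap.sub_apply, dop_X_apply, dF2, dF4])
  · exact key _ (by rw [pow_two, dop_mul_apply]; simp [dop_X_apply, dF0, d00])
  · exact key _ (by rw [pow_two, dop_mul_apply]; simp [dop_X_apply, dF1, d11])
  · exact key _ (by rw [pow_two, dop_mul_apply]; simp [dop_X_apply, dF2, d22])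

/-- Basis monomials of the quotient. -/
def mB : Fin 8 → MvPolynomial (Fin 6) ℝ := fun i => match i with
  | 0 => 1 | 1 => X 0 | 2 => X 1 | 3 => X 2
  | 4 => X 0 * X 1 | 5 => X 0 * X 2 | 6 => X 1 * X 2 | 7 => X 0 * X 1 * X 2

/-- Complementary monomials. -/
def mC : Fin 8 → MvPolynomial (Fin 6) ℝ := fun i => match i with
  | 0 => X 0 * X 1 * X 2 | 1 => X 1 * X 2 | 2 => X 0 * X 2 | 3 => X 0 * X 1
  | 4 => X 2 | 5 => X 1 | 6 => X 0 | 7 => 1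

set_option maxHeartbeats 1000000 in
lemma pair_table (i j : Fin 8) :
    constantCoeff (dop 6 (mC i * mB j) Foct) = if i = j then 1 else 0 := by
  fin_cases i <;> fin_cases j <;>
    simp only [mB, mC, mul_one, one_mul, dop_mul_apply, dop_X_apply, dop_one_apply,
      dF0, dF1, dF2, d00, d01, d02, d10, d11, d12, d20, d21, d22,
      e00, e01, e02, e10, e11, e12, e20, e21, e22, map_zero, map_one, cF] <;>
    simp [Foct]
lemma sq_pow_cases {A : Type*} [CommRing A] {y : A} (h : y ^ 2 = 0) (b : ℕ) :
    y ^ b = 0 ∨ y ^ b = 1 ∨ y ^ b = y := by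
  match b with
  | 0 => exact Or.inr (Or.inl (pow_zero y))
  | 1 => exact Or.inr (Or.inr (pow_one y))
  | (n+2) => exact Or.inl (by rw [pow_add, h, mul_zero])

lemma g1 : (X 0 - X 5 : MvPolynomial (Fin 6) ℝ) ∈ Ioct :=
  Ideal.subset_span (Set.mem_insert _ _)
lemma g2 : (X 1 - X 3 : MvPolynomial (Fin 6) ℝ) ∈ Ioct :=
  Ideal.subset_span (Set.mem_insert_of_mem _ (Set.mem_insert _ _))
lemma g3 : (X 2 - X 4 : MvPolynomial (Fin 6) ℝ) ∈ Ioct :=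
  Ideal.subset_span (Set.mem_insert_of_mem _ (Set.mem_insert_of_mem _ (Set.mem_insert _ _)))
lemma g4 : ((X 0 : MvPolynomial (Fin 6) ℝ) ^ 2) ∈ Ioct :=
  Ideal.subset_span (Set.mem_insert_of_mem _ (Set.mem_insert_of_mem _
    (Set.mem_insert_of_mem _ (Set.mem_insert _ _))))
lemma g5 : ((X 1 : MvPolynomial (Fin 6) ℝ) ^ 2) ∈ Ioct :=
  Ideal.subset_span (Set.mem_insert_of_mem _ (Set.mem_insert_of_mem _
    (Set.mem_insert_of_mem _ (Set.mem_insert_of_mem _ (Set.mem_insert _ _)))))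
lemma g6 : ((X 2 : MvPolynomial (Fin 6) ℝ) ^ 2) ∈ Ioct :=
  Ideal.subset_span (Set.mem_insert_of_mem _ (Set.mem_insert_of_mem _
    (Set.mem_insert_of_mem _ (Set.mem_insert_of_mem _ (Set.mem_insert_of_mem _ rfl)))))

lemma mkX5 : Ideal.Quotient.mk Ioct (X 5) = Ideal.Quotient.mk Ioct (X 0) := by
  rw [Ideal.Quotient.eq, show (X 5 - X 0 : MvPolynomial (Fin 6) ℝ) = -(X 0 - X 5) by ring]
  exact neg_mem g1
lemma mkX3 : Ideal.Quotient.mk Ioct (X 3) = Ideal.Quotient.mk Ioct (X 1) := by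
  rw [Ideal.Quotient.eq, show (X 3 - X 1 : MvPolynomial (Fin 6) ℝ) = -(X 1 - X 3) by ring]
  exact neg_mem g2
lemma mkX4 : Ideal.Quotient.mk Ioct (X 4) = Ideal.Quotient.mk Ioct (X 2) := by
  rw [Ideal.Quotient.eq, show (X 4 - X 2 : MvPolynomial (Fin 6) ℝ) = -(X 2 - X 4) by ring]
  exact neg_mem g3

lemma mksq0 : (Ideal.Quotient.mk Ioct (X 0)) ^ 2 = 0 := by
  rw [← map_pow, Ideal.Quotient.eq_zero_iff_mem]; exact g4
lemma mksq1 : (Ideal.Quotient.mk Ioct (X 1)) ^ 2 = 0 := by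
  rw [← map_pow, Ideal.Quotient.eq_zero_iff_mem]; exact g5
lemma mksq2 : (Ideal.Quotient.mk Ioct (X 2)) ^ 2 = 0 := by
  rw [← map_pow, Ideal.Quotient.eq_zero_iff_mem]; exact g6

lemma mk_smul (c : ℝ) (p : MvPolynomial (Fin 6) ℝ) :
    Ideal.Quotient.mk Ioct (c • p) = c • Ideal.Quotient.mk Ioct p := by
  rfl

lemma mk_monomial (a : Fin 6 →₀ ℕ) (c : ℝ) :
    Ideal.Quotient.mk Ioct (monomial a c) =
      c • ((Ideal.Quotient.mk Ioct (X 0)) ^ (a 0 + a 5) *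
           (Ideal.Quotient.mk Ioct (X 1)) ^ (a 1 + a 3) *
           (Ideal.Quotient.mk Ioct (X 2)) ^ (a 2 + a 4)) := by
  have : monomial a c = c • (X 0 ^ a 0 * X 1 ^ a 1 * X 2 ^ a 2 * X 3 ^ a 3 * X 4 ^ a 4 *
      X 5 ^ a 5 : MvPolynomial (Fin 6) ℝ) := by
    rw [monomial_eq, Finsupp.prod_fintype _ _ (fun i => pow_zero _), Fin.prod_univ_six,
      smul_eq_C_mul]
    try ring
  rw [this, mk_smul]
  refine congrArg (c • ·) ?_
  simp only [map_mul, map_pow, mkX3, mkX4, mkX5, pow_add]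
  ring

set_option linter.unusedTactic false in
lemma mk_mem_span (f : MvPolynomial (Fin 6) ℝ) :
    Ideal.Quotient.mk Ioct f ∈
      Submodule.span ℝ (Set.range fun j => Ideal.Quotient.mk Ioct (mB j)) := by
  induction f using MvPolynomial.induction_on' with
  | add p q hp hq => rw [map_add]; exact Submodule.add_mem _ hp hq
  | monomial a c =>
    rw [mk_monomial]
    refine Submodule.smul_mem _ _ ?_
    rcases sq_pow_cases mksq0 (a 0 + a 5) with h0 | h0 | h0 <;>
    rcases sq_pow_cases mksq1 (a 1 + a 3) with h1 | h1 | h1 <;>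
    rcases sq_pow_cases mksq2 (a 2 + a 4) with h2 | h2 | h2 <;>
    rw [h0, h1, h2] <;>
    (try simp only [one_mul, mul_one, zero_mul, mul_zero]) <;>
    first
      | exact Submodule.zero_mem _
      | (refine Submodule.subset_span ⟨0, ?_⟩; simp [mB, map_mul]; done)
      | (refine Submodule.subset_span ⟨1, ?_⟩; simp [mB, map_mul]; done)
      | (refine Submodule.subset_span ⟨2, ?_⟩; simp [mB, map_mul]; done)
      | (refine Submodule.subset_span ⟨3, ?_⟩; simp [mB, map_mul]; done)
      | (refine Submodule.subset_span ⟨4, ?_⟩; simp [mB, map_mul]; done)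
      | (refine Submodule.subset_span ⟨5, ?_⟩; simp [mB, map_mul]; done)
      | (refine Submodule.subset_span ⟨6, ?_⟩; simp [mB, map_mul]; done)
      | (refine Submodule.subset_span ⟨7, ?_⟩; simp [mB, map_mul]; done)

/-- The annihilator of the facet polynomial of the regular octahedron is the ideal generated
by `∂₁ - ∂₆, ∂₂ - ∂₄, ∂₃ - ∂₅, ∂₁², ∂₂², ∂₃²` (in `0`-based indexing). -/
theorem octahedron_annihilator :
    annIdeal Foct =
      Ideal.span {X 0 - X 5, X 1 - X 3, X 2 - X 4,
        (X 0 : MvPolynomial (Fin 6) ℝ) ^ 2, (X 1 : MvPolynomial (Fin 6) ℝ) ^ 2,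
        (X 2 : MvPolynomial (Fin 6) ℝ) ^ 2} := by
  show annIdeal Foct = Ioct
  refine le_antisymm ?_ Ioct_le_ann
  intro f hf
  have hf' : dop 6 f Foct = 0 := hf
  obtain ⟨c, hc⟩ := (Submodule.mem_span_range_iff_exists_fun ℝ).mp (mk_mem_span f)
  set r : MvPolynomial (Fin 6) ℝ := ∑ j, c j • mB j with hr
  have hmkr : Ideal.Quotient.mk Ioct r = Ideal.Quotient.mk Ioct f := by
    rw [hr, map_sum]
    simp_rw [mk_smul]
    exact hc
  have hrf : f - r ∈ Ioct := Ideal.Quotient.eq.mp hmkr.symm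
  have hrann : dop 6 r Foct = 0 := by
    have h1 : dop 6 (f - r) Foct = 0 := Ioct_le_ann hrf
    rw [map_sub] at h1
    have h2 : dop 6 f Foct - dop 6 r Foct = 0 := h1
    rw [hf', zero_sub, neg_eq_zero] at h2
    exact h2
  have hc0 : ∀ i, c i = 0 := by
    intro i
    have h2 : dop 6 (mC i * r) Foct = 0 := by
      rw [dop_mul_apply, hrann, map_zero]
    have h3 : mC i * r = ∑ j, c j • (mC i * mB j) := by
      rw [hr, Finset.mul_sum]
      simp_rw [mul_smul_comm]
    rw [h3] at h2
    have h4 : constantCoeff (dop 6 (∑ j, c j • (mC i * mB j)) Foct) = c i := by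
      rw [map_sum (dop 6)]
      rw [LinearMap.sum_apply]
      rw [map_sum constantCoeff]
      have h5 : ∀ j : Fin 8, constantCoeff (dop 6 (c j • (mC i * mB j)) Foct) =
          c j * (if i = j then 1 else 0) := by
        intro j
        rw [map_smul (dop 6), LinearMap.smul_apply, constantCoeff_smul, pair_table,
          smul_eq_mul]
      simp_rw [h5]
      simp
    rw [h2] at h4
    simpa using h4.symm
  have hr0 : r = 0 := by
    rw [hr]
    exact Finset.sum_eq_zero fun j _ => by rw [hc0 j, zero_smul]
  rw [hr0, sub_zero] at hrf
  exact hrf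

end
end

section
/- Let F_oct = x1x2x3 + x1x3x4 + x1x4x5 + x1x2x5 + x2x3x6 + x3x4x6 + x4x5x6 + x2x5x6 and A = ℝ[∂_1,…,∂_6]/Ann(F_oct). Then A has the strong Lefschetz property, and for every a = (a_1,…,a_6) ∈ ℝ^6 with all a_i > 0, A satisfies the Hodge–Riemann relation with respect to ℓ_a = a_1∂_1 + ⋯ + a_6∂_6. -/
open MvPolynomial

noncomputable section

lemma dop_X {n : ℕ} (i : Fin n) (F : MvPolynomial (Fin n) ℝ) :
    dop n (X i) F = pderiv i F := by
  simp [dop]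

lemma dop_C {n : ℕ} (c : ℝ) (F : MvPolynomial (Fin n) ℝ) :
    dop n (C c) F = c • F := by
  simp [dop, algebraMap_eq]

lemma dop_mul {n : ℕ} (p q F : MvPolynomial (Fin n) ℝ) :
    dop n (p * q) F = dop n p (dop n q F) := by
  rw [map_mul]; rfl

lemma dop_add {n : ℕ} (p q F : MvPolynomial (Fin n) ℝ) :
    dop n (p + q) F = dop n p F + dop n q F := by
  rw [map_add]; rfl


lemma dop_smul {n : ℕ} (c : ℝ) (p F : MvPolynomial (Fin n) ℝ) :
    dop n (c • p) F = c • dop n p F := by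
  rw [smul_eq_C_mul, dop_mul, dop_C]

/-- `g ↦ dop n g F` as a linear map. -/
def dopT (n : ℕ) (F : MvPolynomial (Fin n) ℝ) :
    MvPolynomial (Fin n) ℝ →ₗ[ℝ] MvPolynomial (Fin n) ℝ where
  toFun g := dop n g F
  map_add' p q := dop_add p q F
  map_smul' c p := dop_smul c p F

def e1 : MvPolynomial (Fin 6) ℝ := X 0 + X 5
def e2 : MvPolynomial (Fin 6) ℝ := X 1 + X 3
def e3 : MvPolynomial (Fin 6) ℝ := X 2 + X 4

lemma pd0 : pderiv 0 Foct = e2 * e3 := by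
  simp [Foct, e2, e3, pderiv_mul, pderiv_X_self, pderiv_X_of_ne]
  ring

lemma pd1 : pderiv 1 Foct = e1 * e3 := by
  simp [Foct, e1, e3, pderiv_mul, pderiv_X_self, pderiv_X_of_ne]; ring
lemma pd2 : pderiv 2 Foct = e1 * e2 := by
  simp [Foct, e1, e2, pderiv_mul, pderiv_X_self, pderiv_X_of_ne]; ring
lemma pd3 : pderiv 3 Foct = e1 * e3 := by
  simp [Foct, e1, e3, pderiv_mul, pderiv_X_self, pderiv_X_of_ne]; ring
lemma pd4 : pderiv 4 Foct = e1 * e2 := by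
  simp [Foct, e1, e2, pderiv_mul, pderiv_X_self, pderiv_X_of_ne]; ring
lemma pd5 : pderiv 5 Foct = e2 * e3 := by
  simp [Foct, e2, e3, pderiv_mul, pderiv_X_self, pderiv_X_of_ne]; ring

lemma dop_sum {n : ℕ} {α : Type*} (s : Finset α) (p : α → MvPolynomial (Fin n) ℝ)
    (F : MvPolynomial (Fin n) ℝ) :
    dop n (∑ i ∈ s, p i) F = ∑ i ∈ s, dop n (p i) F :=
  map_sum (dopT n F) p s

lemma dL_apply (a : Fin 6 → ℝ) (G : MvPolynomial (Fin 6) ℝ) :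
    dop 6 (∑ i, C (a i) * X i) G = ∑ i, a i • pderiv i G := by
  rw [dop_sum]
  exact Finset.sum_congr rfl fun i _ => by rw [dop_mul, dop_C, dop_X]

lemma dL_F (a : Fin 6 → ℝ) :
    dop 6 (∑ i, C (a i) * X i) Foct
      = (a 0 + a 5) • (e2*e3) + (a 1 + a 3) • (e1*e3) + (a 2 + a 4) • (e1*e2) := by
  rw [dL_apply, Fin.sum_univ_six, pd0, pd1, pd2, pd3, pd4, pd5]
  module


lemma dL_e23 (a : Fin 6 → ℝ) :
    dop 6 (∑ i, C (a i) * X i) (e2 * e3) = (a 1 + a 3) • e3 + (a 2 + a 4) • e2 := by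
  rw [dL_apply, Fin.sum_univ_six]
  simp [e2, e3, pderiv_mul, pderiv_X_self, pderiv_X_of_ne]
  module

lemma dL_e13 (a : Fin 6 → ℝ) :
    dop 6 (∑ i, C (a i) * X i) (e1 * e3) = (a 0 + a 5) • e3 + (a 2 + a 4) • e1 := by
  rw [dL_apply, Fin.sum_univ_six]
  simp [e1, e3, pderiv_mul, pderiv_X_self, pderiv_X_of_ne]
  module

lemma dL_e12 (a : Fin 6 → ℝ) :
    dop 6 (∑ i, C (a i) * X i) (e1 * e2) = (a 0 + a 5) • e2 + (a 1 + a 3) • e1 := by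
  rw [dL_apply, Fin.sum_univ_six]
  simp [e1, e2, pderiv_mul, pderiv_X_self, pderiv_X_of_ne]
  module

lemma dL_e1 (a : Fin 6 → ℝ) :
    dop 6 (∑ i, C (a i) * X i) e1 = C (a 0 + a 5) := by
  rw [dL_apply, Fin.sum_univ_six]
  simp [e1, pderiv_X_self, pderiv_X_of_ne, map_add, C_eq_smul_one]

lemma dL_e2 (a : Fin 6 → ℝ) :
    dop 6 (∑ i, C (a i) * X i) e2 = C (a 1 + a 3) := by
  rw [dL_apply, Fin.sum_univ_six]
  simp [e2, pderiv_X_self, pderiv_X_of_ne, map_add, C_eq_smul_one]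

lemma dL_e3 (a : Fin 6 → ℝ) :
    dop 6 (∑ i, C (a i) * X i) e3 = C (a 2 + a 4) := by
  rw [dL_apply, Fin.sum_univ_six]
  simp [e3, pderiv_X_self, pderiv_X_of_ne, map_add, C_eq_smul_one]


lemma degree_eq_sum_univ {n : ℕ} (m : Fin n →₀ ℕ) : m.degree = ∑ i, m i :=
  Finset.sum_subset (Finset.subset_univ _) (fun x _ hx => by
    simpa using (Finsupp.notMem_support_iff.mp hx))

lemma degree_add {n : ℕ} (a b : Fin n →₀ ℕ) : (a + b).degree = a.degree + b.degree := by
  simp [degree_eq_sum_univ, Finsupp.add_apply, Finset.sum_add_distrib]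

lemma degree_single {n : ℕ} (i : Fin n) (k : ℕ) : (Finsupp.single i k).degree = k := by
  classical
  simp [degree_eq_sum_univ, Finsupp.single_apply]

lemma degree_decomp {n : ℕ} {m : Fin n →₀ ℕ} {k : ℕ} (h : m.degree = k + 1) :
    ∃ (i : Fin n) (m' : Fin n →₀ ℕ), m = Finsupp.single i 1 + m' ∧ m'.degree = k := by
  have hm : m ≠ 0 := by rintro rfl; simp at h
  obtain ⟨i, hi⟩ : ∃ i, m i ≠ 0 := by
    by_contra hc; push_neg at hc; exact hm (Finsupp.ext fun j => hc j)
  have h1 : 1 ≤ m i := Nat.one_le_iff_ne_zero.2 hi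
  have heq : m = Finsupp.single i 1 + (m - Finsupp.single i 1) := by
    ext j
    rcases eq_or_ne j i with rfl | hj
    · simp [Finsupp.single_eq_same, Nat.add_sub_cancel' h1]
    · simp [Finsupp.single_eq_of_ne' (Ne.symm hj)]
  refine ⟨i, m - Finsupp.single i 1, heq, ?_⟩
  have := congrArg Finsupp.degree heq
  rw [degree_add, degree_single, h] at this
  omega

lemma degree_one_decomp {n : ℕ} {m : Fin n →₀ ℕ} (h : m.degree = 1) :
    ∃ i, m = Finsupp.single i 1 := by
  obtain ⟨i, m', hm, hd⟩ := degree_decomp h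
  rw [Finsupp.degree_eq_zero_iff] at hd
  exact ⟨i, by simp [hm, hd]⟩

lemma mem_support_degree {g : MvPolynomial (Fin 6) ℝ} {k : ℕ} (hg : g.IsHomogeneous k)
    {m : Fin 6 →₀ ℕ} (hm : m ∈ g.support) : m.degree = k := by
  by_contra h
  exact (mem_support_iff.mp hm) (hg.coeff_eq_zero h)

lemma homog_span {k : ℕ} {g : MvPolynomial (Fin 6) ℝ} (hg : g.IsHomogeneous k) :
    g ∈ Submodule.span ℝ
      {p : MvPolynomial (Fin 6) ℝ | ∃ m : Fin 6 →₀ ℕ, m.degree = k ∧ p = monomial m 1} := by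
  nth_rewrite 1 [as_sum g]
  apply Submodule.sum_mem
  intro m hm
  have : (monomial m (coeff m g)) = coeff m g • monomial m 1 := by
    rw [smul_monomial, smul_eq_mul, mul_one]
  rw [this]
  exact Submodule.smul_mem _ _
    (Submodule.subset_span ⟨m, mem_support_degree hg hm, rfl⟩)


lemma monomial_two (i j : Fin 6) :
    (monomial (Finsupp.single i 1 + Finsupp.single j 1) (1:ℝ)) = X i * X j := by
  rw [X, X, monomial_mul, one_mul]

lemma pd_lin (a u v : Fin 6) :
    ∃ c : ℝ, pderiv a (X u + X v : MvPolynomial (Fin 6) ℝ) = C c := by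
  rw [map_add]
  rcases eq_or_ne a u with rfl | h
  · rcases eq_or_ne a v with rfl | h'
    · exact ⟨2, by rw [pderiv_X_self]; rw [show ((2:ℝ)) = 1 + 1 by norm_num, map_add, map_one]⟩
    · exact ⟨1, by rw [pderiv_X_self, pderiv_X_of_ne h'.symm, add_zero, map_one]⟩
  · rcases eq_or_ne a v with rfl | h'
    · exact ⟨1, by rw [pderiv_X_self, pderiv_X_of_ne h.symm, zero_add, map_one]⟩
    · exact ⟨0, by rw [pderiv_X_of_ne h.symm, pderiv_X_of_ne h'.symm, add_zero, map_zero]⟩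

lemma pde1 (a : Fin 6) : ∃ c : ℝ, pderiv a e1 = C c := pd_lin a 0 5
lemma pde2 (a : Fin 6) : ∃ c : ℝ, pderiv a e2 = C c := pd_lin a 1 3
lemma pde3 (a : Fin 6) : ∃ c : ℝ, pderiv a e3 = C c := pd_lin a 2 4

lemma pderiv_mul_mem {S : Submodule ℝ (MvPolynomial (Fin 6) ℝ)} (a : Fin 6)
    {p q : MvPolynomial (Fin 6) ℝ} (hp : ∃ c : ℝ, pderiv a p = C c)
    (hq : ∃ c : ℝ, pderiv a q = C c) (hpS : p ∈ S) (hqS : q ∈ S) :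
    pderiv a (p * q) ∈ S := by
  obtain ⟨c, hc⟩ := hp; obtain ⟨d, hd⟩ := hq
  rw [pderiv_mul, hc, hd, C_mul', mul_comm, C_mul']
  exact S.add_mem (S.smul_mem _ hqS) (S.smul_mem _ hpS)

lemma pdd_mem (i j : Fin 6) :
    pderiv i (pderiv j Foct) ∈ Submodule.span ℝ {e1, e2, e3} := by
  have h1 : e1 ∈ Submodule.span ℝ {e1, e2, e3} :=
    Submodule.subset_span (by simp)
  have h2 : e2 ∈ Submodule.span ℝ {e1, e2, e3} :=
    Submodule.subset_span (by simp)
  have h3 : e3 ∈ Submodule.span ℝ {e1, e2, e3} :=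
    Submodule.subset_span (by simp)
  fin_cases j
  · show pderiv i (pderiv 0 Foct) ∈ _
    rw [pd0]; exact pderiv_mul_mem i (pde2 i) (pde3 i) h2 h3
  · show pderiv i (pderiv 1 Foct) ∈ _
    rw [pd1]; exact pderiv_mul_mem i (pde1 i) (pde3 i) h1 h3
  · show pderiv i (pderiv 2 Foct) ∈ _
    rw [pd2]; exact pderiv_mul_mem i (pde1 i) (pde2 i) h1 h2
  · show pderiv i (pderiv 3 Foct) ∈ _
    rw [pd3]; exact pderiv_mul_mem i (pde1 i) (pde3 i) h1 h3
  · show pderiv i (pderiv 4 Foct) ∈ _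
    rw [pd4]; exact pderiv_mul_mem i (pde1 i) (pde2 i) h1 h2
  · show pderiv i (pderiv 5 Foct) ∈ _
    rw [pd5]; exact pderiv_mul_mem i (pde2 i) (pde3 i) h2 h3

lemma dop_homog2_mem {g : MvPolynomial (Fin 6) ℝ} (hg : g.IsHomogeneous 2) :
    dop 6 g Foct ∈ Submodule.span ℝ {e1, e2, e3} := by
  have h := homog_span hg
  clear hg
  induction h using Submodule.span_induction with
  | mem p hp =>
      obtain ⟨m, hm, rfl⟩ := hp
      obtain ⟨i, m', rfl, hd⟩ := degree_decomp hm
      obtain ⟨j, rfl⟩ := degree_one_decomp hd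
      rw [monomial_two, dop_mul, dop_X, dop_X]
      exact pdd_mem i j
  | zero => rw [map_zero]; exact Submodule.zero_mem _
  | add x y hx hy ihx ihy =>
      rw [dop_add]; exact Submodule.add_mem _ ihx ihy
  | smul c x hx ihx =>
      rw [dop_smul]; exact Submodule.smul_mem _ _ ihx


lemma pd2_const (i j : Fin 6) (p q : MvPolynomial (Fin 6) ℝ)
    (hp : ∀ a, ∃ c : ℝ, pderiv a p = C c) (hq : ∀ a, ∃ c : ℝ, pderiv a q = C c) :
    ∃ c : ℝ, pderiv i (pderiv j (p * q)) = C c := by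
  obtain ⟨c1, h1⟩ := hp j; obtain ⟨c2, h2⟩ := hq j
  obtain ⟨c3, h3⟩ := hp i; obtain ⟨c4, h4⟩ := hq i
  refine ⟨c1 * c4 + c3 * c2, ?_⟩
  rw [pderiv_mul, h1, h2, map_add, pderiv_mul, pderiv_mul, h3, h4, pderiv_C, pderiv_C]
  simp only [zero_mul, mul_zero, zero_add, add_zero, ← C_mul, ← C_add]

lemma pddd (i j k : Fin 6) :
    ∃ c : ℝ, pderiv i (pderiv j (pderiv k Foct)) = C c := by
  fin_cases k
  · show ∃ c : ℝ, pderiv i (pderiv j (pderiv 0 Foct)) = C c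
    rw [pd0]; exact pd2_const i j _ _ pde2 pde3
  · show ∃ c : ℝ, pderiv i (pderiv j (pderiv 1 Foct)) = C c
    rw [pd1]; exact pd2_const i j _ _ pde1 pde3
  · show ∃ c : ℝ, pderiv i (pderiv j (pderiv 2 Foct)) = C c
    rw [pd2]; exact pd2_const i j _ _ pde1 pde2
  · show ∃ c : ℝ, pderiv i (pderiv j (pderiv 3 Foct)) = C c
    rw [pd3]; exact pd2_const i j _ _ pde1 pde3
  · show ∃ c : ℝ, pderiv i (pderiv j (pderiv 4 Foct)) = C c
    rw [pd4]; exact pd2_const i j _ _ pde1 pde2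
  · show ∃ c : ℝ, pderiv i (pderiv j (pderiv 5 Foct)) = C c
    rw [pd5]; exact pd2_const i j _ _ pde2 pde3

lemma dop_homog3 {g : MvPolynomial (Fin 6) ℝ} (hg : g.IsHomogeneous 3) :
    ∃ c : ℝ, dop 6 g Foct = C c := by
  have h := homog_span hg
  clear hg
  have hmem : dop 6 g Foct ∈ Submodule.span ℝ {(1 : MvPolynomial (Fin 6) ℝ)} := by
    induction h using Submodule.span_induction with
    | mem p hp =>
        obtain ⟨m, hm, rfl⟩ := hp
        obtain ⟨i, m', rfl, hd⟩ := degree_decomp hm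
        obtain ⟨j, m'', rfl, hd'⟩ := degree_decomp hd
        obtain ⟨k, rfl⟩ := degree_one_decomp hd'
        have : (monomial (Finsupp.single i 1 + (Finsupp.single j 1 + Finsupp.single k 1))
            (1:ℝ)) = X i * (X j * X k) := by
          rw [X, X, X, monomial_mul, one_mul, monomial_mul, one_mul]
        rw [this, dop_mul, dop_mul, dop_X, dop_X, dop_X]
        obtain ⟨c, hc⟩ := pddd i j k
        rw [hc, C_eq_smul_one]
        exact Submodule.smul_mem _ _ (Submodule.subset_span rfl)
    | zero => rw [map_zero]; exact Submodule.zero_mem _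
    | add x y hx hy ihx ihy => rw [dop_add]; exact Submodule.add_mem _ ihx ihy
    | smul c x hx ihx => rw [dop_smul]; exact Submodule.smul_mem _ _ ihx
  obtain ⟨c, hc⟩ := Submodule.mem_span_singleton.mp hmem
  exact ⟨c, by rw [← hc, ← C_eq_smul_one]⟩

lemma homog1_rep {g : MvPolynomial (Fin 6) ℝ} (hg : g.IsHomogeneous 1) :
    ∃ c : Fin 6 → ℝ, g = ∑ i, C (c i) * X i := by
  have h := homog_span hg
  have hsub : {p : MvPolynomial (Fin 6) ℝ | ∃ m : Fin 6 →₀ ℕ, m.degree = 1 ∧ p = monomial m 1}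
      ⊆ Set.range (X : Fin 6 → MvPolynomial (Fin 6) ℝ) := by
    rintro p ⟨m, hm, rfl⟩
    obtain ⟨i, rfl⟩ := degree_one_decomp hm
    exact ⟨i, rfl⟩
  have h2 := Submodule.span_mono hsub h
  obtain ⟨c, hc⟩ := Submodule.mem_span_range_iff_exists_fun ℝ |>.mp h2
  exact ⟨c, by rw [← hc]; exact Finset.sum_congr rfl fun i _ => smul_eq_C_mul _ _⟩

lemma homog0_rep {g : MvPolynomial (Fin 6) ℝ} (hg : g.IsHomogeneous 0) :
    ∃ c : ℝ, g = C c := by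
  have h := homog_span hg
  have hsub : {p : MvPolynomial (Fin 6) ℝ | ∃ m : Fin 6 →₀ ℕ, m.degree = 0 ∧ p = monomial m 1}
      ⊆ ({1} : Set (MvPolynomial (Fin 6) ℝ)) := by
    rintro p ⟨m, hm, rfl⟩
    rw [Finsupp.degree_eq_zero_iff] at hm
    subst hm
    simp [monomial_zero']
  have h2 := Submodule.span_mono hsub h
  obtain ⟨c, hc⟩ := Submodule.mem_span_singleton.mp h2
  exact ⟨c, by rw [← hc, ← C_eq_smul_one]⟩


lemma dL_quad (a : Fin 6 → ℝ) (u v w : ℝ) :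
    dop 6 (∑ i, C (a i) * X i) (u • (e2*e3) + v • (e1*e3) + w • (e1*e2))
      = (v * (a 2 + a 4) + w * (a 1 + a 3)) • e1
        + (u * (a 2 + a 4) + w * (a 0 + a 5)) • e2
        + (u * (a 1 + a 3) + v * (a 0 + a 5)) • e3 := by
  rw [map_add, map_add, map_smul, map_smul, map_smul, dL_e23, dL_e13, dL_e12]
  module

lemma dL_lin (a : Fin 6 → ℝ) (u v w : ℝ) :
    dop 6 (∑ i, C (a i) * X i) (u • e1 + v • e2 + w • e3)
      = C ((a 0 + a 5) * u + (a 1 + a 3) * v + (a 2 + a 4) * w) := by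
  rw [map_add, map_add, map_smul, map_smul, map_smul, dL_e1, dL_e2, dL_e3]
  rw [smul_eq_C_mul, smul_eq_C_mul, smul_eq_C_mul, ← C_mul, ← C_mul, ← C_mul, ← C_add, ← C_add]
  ring_nf

/-- Third-order application: `L_a L_b (f_c F)` is an explicit constant. -/
lemma dLLL (a b c : Fin 6 → ℝ) :
    dop 6 (∑ i, C (a i) * X i)
      (dop 6 (∑ i, C (b i) * X i) (dop 6 (∑ i, C (c i) * X i) Foct))
    = C ((a 0 + a 5) * ((c 1 + c 3) * (b 2 + b 4) + (c 2 + c 4) * (b 1 + b 3))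
        + (a 1 + a 3) * ((c 0 + c 5) * (b 2 + b 4) + (c 2 + c 4) * (b 0 + b 5))
        + (a 2 + a 4) * ((c 0 + c 5) * (b 1 + b 3) + (c 1 + c 3) * (b 0 + b 5))) := by
  rw [dL_F, dL_quad, dL_lin]


lemma e_indep {α β γ : ℝ} (h : α • e1 + β • e2 + γ • e3 = 0) :
    α = 0 ∧ β = 0 ∧ γ = 0 := by
  have h1 := congrArg (eval (fun j : Fin 6 => if j = 0 then (1:ℝ) else 0)) h
  have h2 := congrArg (eval (fun j : Fin 6 => if j = 1 then (1:ℝ) else 0)) h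
  have h3 := congrArg (eval (fun j : Fin 6 => if j = 2 then (1:ℝ) else 0)) h
  simp [e1, e2, e3] at h1 h2 h3
  exact ⟨h1, h2, h3⟩

lemma q_indep {α β γ : ℝ} (h : α • (e2*e3) + β • (e1*e3) + γ • (e1*e2) = 0) :
    α = 0 ∧ β = 0 ∧ γ = 0 := by
  have h1 := congrArg (eval (fun j : Fin 6 => if j = 1 ∨ j = 2 then (1:ℝ) else 0)) h
  have h2 := congrArg (eval (fun j : Fin 6 => if j = 0 ∨ j = 2 then (1:ℝ) else 0)) h
  have h3 := congrArg (eval (fun j : Fin 6 => if j = 0 ∨ j = 1 then (1:ℝ) else 0)) h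
  simp [e1, e2, e3] at h1 h2 h3
  exact ⟨h1, h2, h3⟩


lemma mk_eq_zero_iff (p : MvPolynomial (Fin 6) ℝ) :
    Ideal.Quotient.mk (annIdeal Foct) p = 0 ↔ dop 6 p Foct = 0 :=
  Ideal.Quotient.eq_zero_iff_mem

lemma La_sub (c c' : Fin 6 → ℝ) :
    (∑ i, C (c i) * X i) - (∑ i, C (c' i) * X i)
      = ∑ i : Fin 6, C (c i - c' i) * (X i : MvPolynomial (Fin 6) ℝ) := by
  rw [← Finset.sum_sub_distrib]
  exact Finset.sum_congr rfl fun i _ => by rw [C_sub]; ring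

theorem hrr_aux (a : Fin 6 → ℝ) (ha : ∀ i, 0 < a i) :
    SatisfiesHRR Foct 3 (∑ i, C (a i) * X i) := by
  intro k hk f hf hker hne
  set L : MvPolynomial (Fin 6) ℝ := ∑ i, C (a i) * X i with hL
  have hk' : k ≤ 1 := by omega
  clear hk
  interval_cases k
  · -- k = 0
    obtain ⟨c, hfc⟩ := homog0_rep hf
    subst hfc
    have hc : c ≠ 0 := by
      intro h
      exact hne (by rw [h, map_zero, map_zero])
    have hrw : L ^ (3 - 2 * 0) * C c * C c = C (c * c) * (L * (L * L)) := by
      rw [C_mul]; norm_num; ring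
    rw [hrw, dop_mul, dop_C, dop_mul, dop_mul, dLLL a a a]
    have hb1 : 0 < a 0 + a 5 := by have := ha 0; have := ha 5; linarith
    have hb2 : 0 < a 1 + a 3 := by have := ha 1; have := ha 3; linarith
    have hb3 : 0 < a 2 + a 4 := by have := ha 2; have := ha 4; linarith
    rw [smul_eq_C_mul, ← C_mul]
    simp only [constantCoeff_C, pow_zero, one_mul]
    have hcc : 0 < c * c := mul_self_pos.mpr hc
    nlinarith [mul_pos (mul_pos hb1 hb2) hb3, mul_pos hcc (mul_pos (mul_pos hb1 hb2) hb3)]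
  · -- k = 1
    obtain ⟨c, hfc⟩ := homog1_rep hf
    subst hfc
    set b1 : ℝ := a 0 + a 5 with hb1d
    set b2 : ℝ := a 1 + a 3 with hb2d
    set b3 : ℝ := a 2 + a 4 with hb3d
    set d1 : ℝ := c 0 + c 5 with hd1d
    set d2 : ℝ := c 1 + c 3 with hd2d
    set d3 : ℝ := c 2 + c 4 with hd3d
    have hb1 : 0 < b1 := by have := ha 0; have := ha 5; rw [hb1d]; linarith
    have hb2 : 0 < b2 := by have := ha 1; have := ha 3; rw [hb2d]; linarith
    have hb3 : 0 < b3 := by have := ha 2; have := ha 4; rw [hb3d]; linarith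
    -- the primitivity condition
    have hkrw : L ^ (3 - 2 * 1 + 1) * (∑ i, C (c i) * X i)
        = L * (L * (∑ i, C (c i) * X i)) := by norm_num; ring
    rw [hkrw, dop_mul, dop_mul, dLLL a a c] at hker
    have hS : b1 * (d2 * b3 + d3 * b2) + b2 * (d1 * b3 + d3 * b1) + b3 * (d1 * b2 + d2 * b1)
        = 0 := by
      have := congrArg constantCoeff hker
      simpa using this
    -- nondegeneracy: some dᵢ ≠ 0
    have hd : ¬ (d1 = 0 ∧ d2 = 0 ∧ d3 = 0) := by
      rintro ⟨h1, h2, h3⟩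
      apply hne
      rw [mk_eq_zero_iff, dL_F, ← hd1d, ← hd2d, ← hd3d, h1, h2, h3]
      simp
    -- the goal
    have hgrw : L ^ (3 - 2 * 1) * (∑ i, C (c i) * X i) * (∑ i, C (c i) * X i)
        = L * ((∑ i, C (c i) * X i) * (∑ i, C (c i) * X i)) := by norm_num; ring
    rw [hgrw, dop_mul, dop_mul, dLLL a c c]
    simp only [constantCoeff_C, pow_one, neg_one_mul, neg_mul]
    rw [← hd1d, ← hd2d, ← hd3d, ← hb1d, ← hb2d, ← hb3d]
    clear_value b1 b2 b3 d1 d2 d3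
    clear hb1d hb2d hb3d hd1d hd2d hd3d hkrw hgrw hker hne hf
    have hP : 0 < b1 * b2 * b3 := by positivity
    have hsum : b2*b3*d1 + b1*b3*d2 + b1*b2*d3 = 0 := by linear_combination hS / 2
    have hABC : 0 < (b2*b3*d1)^2 + (b1*b3*d2)^2 + (b1*b2*d3)^2 := by
      have h1 := sq_nonneg (b2*b3*d1)
      have h2 := sq_nonneg (b1*b3*d2)
      have h3 := sq_nonneg (b1*b2*d3)
      have sqpos : ∀ x : ℝ, x ≠ 0 → 0 < x ^ 2 := fun x hx => by
        rw [sq]; exact mul_self_pos.mpr hx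
      rcases not_and_or.mp hd with h | h
      · have := sqpos _ (mul_ne_zero (mul_ne_zero hb2.ne' hb3.ne') h)
        linarith
      · rcases not_and_or.mp h with h' | h'
        · have := sqpos _ (mul_ne_zero (mul_ne_zero hb1.ne' hb3.ne') h')
          linarith
        · have := sqpos _ (mul_ne_zero (mul_ne_zero hb1.ne' hb2.ne') h')
          linarith
    have hid : b1 * b2 * b3 *
        (b1 * (d2 * d3 + d3 * d2) + b2 * (d1 * d3 + d3 * d1) + b3 * (d1 * d2 + d2 * d1))
        = -((b2*b3*d1)^2 + (b1*b3*d2)^2 + (b1*b2*d3)^2) := by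
      linear_combination (b2*b3*d1 + b1*b3*d2 + b1*b2*d3) * hsum
    have key : b1 * (d2 * d3 + d3 * d2) + b2 * (d1 * d3 + d3 * d1) + b3 * (d1 * d2 + d2 * d1)
        < 0 := by nlinarith [hid, hABC, hP]
    linarith [key]


lemma mem_grade_iff {k : ℕ} {x : AF Foct} :
    x ∈ gradeA Foct k ↔ ∃ p : MvPolynomial (Fin 6) ℝ, p.IsHomogeneous k ∧
      Ideal.Quotient.mk (annIdeal Foct) p = x := by
  constructor
  · rintro ⟨p, hp, rfl⟩
    exact ⟨p, hp, rfl⟩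
  · rintro ⟨p, hp, rfl⟩
    exact ⟨p, hp, rfl⟩

lemma dop_sub {n : ℕ} (p q F : MvPolynomial (Fin n) ℝ) :
    dop n (p - q) F = dop n p F - dop n q F :=
  map_sub (dopT n F) p q

lemma dop_homog2 {g : MvPolynomial (Fin 6) ℝ} (hg : g.IsHomogeneous 2) :
    ∃ u v w : ℝ, dop 6 g Foct = u • e1 + v • e2 + w • e3 := by
  have h := dop_homog2_mem hg
  rw [show ({e1, e2, e3} : Set (MvPolynomial (Fin 6) ℝ))
      = insert e1 (insert e2 {e3}) from rfl] at h
  obtain ⟨u, z, hz, hx⟩ := Submodule.mem_span_insert.mp h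
  obtain ⟨v, z', hz', hx'⟩ := Submodule.mem_span_insert.mp hz
  obtain ⟨w, hw⟩ := Submodule.mem_span_singleton.mp hz'
  exact ⟨u, v, w, by rw [hx, hx', ← hw, add_assoc]⟩

lemma La_homog (c : Fin 6 → ℝ) :
    (∑ i, C (c i) * X i : MvPolynomial (Fin 6) ℝ).IsHomogeneous 1 :=
  IsHomogeneous.sum _ _ _ fun i _ => (isHomogeneous_X ℝ i).C_mul (c i)

theorem slp_aux : HasSLP Foct 3 := by
  classical
  set o : Fin 6 → ℝ := fun _ => 1 with ho
  set L1 : MvPolynomial (Fin 6) ℝ := ∑ i, C (o i) * X i with hL1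
  have hhom : L1.IsHomogeneous 1 := La_homog o
  have hK : dop 6 (L1 * (L1 * L1)) Foct = C 48 := by
    rw [dop_mul, dop_mul, dLLL o o o]; norm_num [ho]
  have hmk3 : ∀ p : MvPolynomial (Fin 6) ℝ,
      (Ideal.Quotient.mk (annIdeal Foct) L1) ^ 3 * Ideal.Quotient.mk (annIdeal Foct) p
        = Ideal.Quotient.mk (annIdeal Foct) (L1 ^ 3 * p) := fun p => by
    rw [map_mul, map_pow]
  have hd3C : ∀ r : ℝ, dop 6 (L1 ^ 3 * C r) Foct = C (r * 48) := fun r => by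
    rw [show L1 ^ 3 * C r = C r * (L1 * (L1 * L1)) by ring, dop_mul, dop_C, hK,
      smul_eq_C_mul, ← C_mul]
  refine ⟨Ideal.Quotient.mk (annIdeal Foct) L1, mem_grade_iff.mpr ⟨L1, hhom, rfl⟩, ?_⟩
  intro k hk
  have hk' : k ≤ 1 := by omega
  interval_cases k
  · -- k = 0 : multiplication by ℓ^3 from grade 0 to grade 3
    norm_num
    refine ⟨?_, ?_, ?_⟩
    · rintro x hx
      obtain ⟨p, hp, rfl⟩ := mem_grade_iff.mp hx
      refine mem_grade_iff.mpr ⟨L1 ^ 3 * p, by simpa using (hhom.pow 3).mul hp, ?_⟩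
      rw [← hmk3]
    · rintro x hx y hy hxy
      obtain ⟨p, hp, rfl⟩ := mem_grade_iff.mp hx
      obtain ⟨q, hq, rfl⟩ := mem_grade_iff.mp hy
      obtain ⟨cp, rfl⟩ := homog0_rep hp
      obtain ⟨cq, rfl⟩ := homog0_rep hq
      simp only [hmk3] at hxy
      have hsub := Ideal.Quotient.eq.mp hxy
      have : dop 6 (L1 ^ 3 * C cp - L1 ^ 3 * C cq) Foct = 0 := hsub
      rw [dop_sub, hd3C, hd3C, ← C_sub] at this
      have hcc : cp * 48 - cq * 48 = 0 := by
        have := congrArg constantCoeff this; simpa using this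
      have : cp = cq := by linarith
      rw [this]
    · rintro y hy
      obtain ⟨g, hg, rfl⟩ := mem_grade_iff.mp hy
      obtain ⟨γ, hγ⟩ := dop_homog3 hg
      refine ⟨Ideal.Quotient.mk (annIdeal Foct) (C (γ / 48)),
        mem_grade_iff.mpr ⟨C (γ / 48), isHomogeneous_C _ _, rfl⟩, ?_⟩
      show (Ideal.Quotient.mk (annIdeal Foct) L1) ^ 3 * _ = _
      rw [hmk3]
      refine (Ideal.Quotient.eq.mpr ?_)
      show dop 6 (L1 ^ 3 * C (γ / 48) - g) Foct = 0
      rw [dop_sub, hd3C, hγ, ← C_sub]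
      norm_num
  · -- k = 1 : multiplication by ℓ from grade 1 to grade 2
    norm_num
    refine ⟨?_, ?_, ?_⟩
    · rintro x hx
      obtain ⟨p, hp, rfl⟩ := mem_grade_iff.mp hx
      refine mem_grade_iff.mpr ⟨L1 * p, by simpa using hhom.mul hp, ?_⟩
      rw [map_mul]
    · rintro x hx y hy hxy
      obtain ⟨p, hp, rfl⟩ := mem_grade_iff.mp hx
      obtain ⟨q, hq, rfl⟩ := mem_grade_iff.mp hy
      obtain ⟨cp, rfl⟩ := homog1_rep hp
      obtain ⟨cq, rfl⟩ := homog1_rep hq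
      simp only [← map_mul] at hxy
      have hsub := Ideal.Quotient.eq.mp hxy
      have h0 : dop 6 (L1 * ((∑ i, C (cp i) * X i) - (∑ i, C (cq i) * X i))) Foct = 0 := by
        rw [mul_sub]
        exact hsub
      rw [La_sub, dop_mul, dL_F, map_add, map_add, map_smul, map_smul, map_smul,
        dL_e23, dL_e13, dL_e12] at h0
      have h0' : (((cp 1 - cq 1) + (cp 3 - cq 3)) * (o 2 + o 4)
            + ((cp 2 - cq 2) + (cp 4 - cq 4)) * (o 1 + o 3)) • e1
          + (((cp 0 - cq 0) + (cp 5 - cq 5)) * (o 2 + o 4)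
            + ((cp 2 - cq 2) + (cp 4 - cq 4)) * (o 0 + o 5)) • e2
          + (((cp 0 - cq 0) + (cp 5 - cq 5)) * (o 1 + o 3)
            + ((cp 1 - cq 1) + (cp 3 - cq 3)) * (o 0 + o 5)) • e3 = 0 := by
        rw [← h0]; module
      obtain ⟨hh1, hh2, hh3⟩ := e_indep h0'
      simp only [ho] at hh1 hh2 hh3
      have hd1 : (cp 0 - cq 0) + (cp 5 - cq 5) = 0 := by linarith
      have hd2 : (cp 1 - cq 1) + (cp 3 - cq 3) = 0 := by linarith
      have hd3 : (cp 2 - cq 2) + (cp 4 - cq 4) = 0 := by linarith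
      refine Ideal.Quotient.eq.mpr ?_
      show dop 6 ((∑ i, C (cp i) * X i) - (∑ i, C (cq i) * X i)) Foct = 0
      rw [La_sub, dL_F, hd1, hd2, hd3]
      simp
    · rintro y hy
      obtain ⟨g, hg, rfl⟩ := mem_grade_iff.mp hy
      obtain ⟨u, v, w, huvw⟩ := dop_homog2 hg
      set cc : Fin 6 → ℝ := fun i =>
        if i = 0 then (v + w - u) / 4 else if i = 1 then (u + w - v) / 4
          else if i = 2 then (u + v - w) / 4 else 0 with hcc
      refine ⟨Ideal.Quotient.mk (annIdeal Foct) (∑ i, C (cc i) * X i),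
        mem_grade_iff.mpr ⟨_, La_homog cc, rfl⟩, ?_⟩
      beta_reduce
      rw [← map_mul]
      refine Ideal.Quotient.eq.mpr ?_
      show dop 6 (L1 * (∑ i, C (cc i) * X i) - g) Foct = 0
      rw [dop_sub, dop_mul, dL_F, map_add, map_add, map_smul, map_smul, map_smul,
        dL_e23, dL_e13, dL_e12, huvw]
      have hc0 : cc 0 = (v + w - u) / 4 := by simp [hcc]
      have hc1 : cc 1 = (u + w - v) / 4 := by simp [hcc]
      have hc2 : cc 2 = (u + v - w) / 4 := by simp [hcc]
      have hc3 : cc 3 = 0 := by simp [hcc]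
      have hc4 : cc 4 = 0 := by simp [hcc]
      have hc5 : cc 5 = 0 := by simp [hcc]
      rw [hc0, hc1, hc2, hc3, hc4, hc5]
      simp only [ho]
      module


/-- The Artinian Gorenstein algebra associated to the regular octahedron has the strong
Lefschetz property, and satisfies the Hodge–Riemann relation with respect to
`ℓ_a = a₁∂₁ + ⋯ + a₆∂₆` for every `a` in the positive orthant. -/
theorem octahedron_slp_and_hrr :
    HasSLP Foct 3 ∧
      ∀ a : Fin 6 → ℝ, (∀ i, 0 < a i) →
        SatisfiesHRR Foct 3 (∑ i, C (a i) * X i) := by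
  exact ⟨slp_aux, hrr_aux⟩

end
end
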